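/- Let α > 1, let a_1,…,a_n and t be positive integers with t < a := Σ_{i=1}^n a_i, and let m = ⌈3α²⌉. Consider the market N(a,t,α) with doctors d_i^j (i ∈ {1,…,n}, j ∈ {0,1,…,m}), hospitals h^+, h^-, and h_i^j (i ∈ {1,…,n}, j ∈ {0,…,m−1}), and contracts: r^{i,1} = (d_i^0,h^+) with u = s = a_i/t; r^{i,2} = (d_i^0,h^-) with u = s = a_i/(a−t); r^{i,3} = (d_i^0,h_i^0) with u = s = 1; x^{i,j} = (d_i^j,h_i^0) with u = 2α/m, s = 1/m for j = 1,…,m; y^{i,j} = (d_i^j,h_i^{j−1}) with u = s = 1 for j = 2,…,m; z^{i,j} = (d_i^j,h_i^j) with u = 2α, s = 1 for j = 1,…,m−1; preferences: r^{i,1} ≻_{d_i^0} r^{i,2} ≻_{d_i^0} r^{i,3} ≻_{d_i^0} ∅; x^{i,1} ≻_{d_i^1} z^{i,1} ≻_{d_i^1} ∅; y^{i,j} ≻_{d_i^j} x^{i,j} ≻_{d_i^j} z^{i,j} ≻_{d_i^j} ∅ for j = 2,…,m−1; y^{i,m} ≻_{d_i^m} x^{i,m} ≻_{d_i^m} ∅.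 If there exists I* ⊆ {1,…,n} with Σ_{i∈I*} a_i = t, then the set {r^{i,1} : i ∈ I*} ∪ {r^{i,2} : i ∉ I*} ∪ ⋃_{i=1}^n ({x^{i,1}} ∪ {y^{i,2},…,y^{i,m}}) is a 1-stable matching of N(a,t,α). -/

import Mathlib

/-- A two-sided matching market with monetary transfers and budget constraints,
following Kawase–Iwasaki. `D` is the set of doctors, `H` the set of hospitals,
`X` the set of contracts; each contract has a doctor `doc x`, a hospital `hos x`,
a utility `u x ≥ 0` and a size (wage as a fraction of the budget) `s x ≥ 0`.
For each doctor `d`, `pref d` is a strict linear order on `X_d ∪ {∅}`, the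
null contract `∅` being represented by `none`. -/
structure Market where
  D : Type
  H : Type
  X : Type
  fintypeX : Fintype X
  decEqX : DecidableEq X
  decEqD : DecidableEq D
  decEqH : DecidableEq H
  doc : X → D
  hos : X → H
  pref : D → Option X → Option X → Prop
  u : X → ℝ
  s : X → ℝ
  u_nonneg : ∀ x, 0 ≤ u x
  s_nonneg : ∀ x, 0 ≤ s x
  pref_irrefl : ∀ d o, ¬ pref d o o
  pref_trans : ∀ d o₁ o₂ o₃, pref d o₁ o₂ → pref d o₂ o₃ → pref d o₁ o₃
  pref_total : ∀ d (o₁ o₂ : Option X),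
    (∀ x, o₁ = some x → doc x = d) → (∀ x, o₂ = some x → doc x = d) →
    o₁ ≠ o₂ → pref d o₁ o₂ ∨ pref d o₂ o₁

attribute [instance] Market.fintypeX Market.decEqX Market.decEqD Market.decEqH

namespace Market

variable (M : Market)

/-- `X'_d`: the contracts of `X'` associated with doctor `d`. -/
def restrD (X' : Finset M.X) (d : M.D) : Finset M.X := X'.filter (fun x => M.doc x = d)

/-- `X'_h`: the contracts of `X'` associated with hospital `h`. -/
def restrH (X' : Finset M.X) (h : M.H) : Finset M.X := X'.filter (fun x => M.hos x = h)

/-- `s(X') = Σ_{x ∈ X'} s(x)`. -/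
def sSum (X' : Finset M.X) : ℝ := ∑ x ∈ X', M.s x

/-- `u(X') = Σ_{x ∈ X'} u(x)`. -/
def uSum (X' : Finset M.X) : ℝ := ∑ x ∈ X', M.u x

/-- A matching: each doctor signs at most one contract and each hospital's
total wages are within its budget. -/
def IsMatching (X' : Finset M.X) : Prop :=
  (∀ d, (M.restrD X' d).card ≤ 1) ∧ (∀ h, M.sSum (M.restrH X' h) ≤ 1)

/-- Contract `x` is strictly preferred by its doctor to her assignment under `X'`
(to the null contract in case she is unassigned). -/
def Prefers (X' : Finset M.X) (x : M.X) : Prop :=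
  (∀ x' ∈ M.restrD X' (M.doc x), M.pref (M.doc x) (some x) (some x')) ∧
  (M.restrD X' (M.doc x) = ∅ → M.pref (M.doc x) (some x) none)

/-- `X''` is an `α`-blocking coalition of hospital `h` for the matching `X'`. -/
def IsBlocking (α : ℝ) (X' : Finset M.X) (h : M.H) (X'' : Finset M.X) : Prop :=
  (∀ x ∈ X'', M.hos x = h) ∧ M.IsMatching X'' ∧
  (∀ x ∈ X'' \ X', M.Prefers X' x) ∧
  M.uSum X'' > α * M.uSum (M.restrH X' h)

/-- `X'` is an `α`-stable matching: it is a matching admitting no `α`-blocking coalition. -/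
def IsStable (α : ℝ) (X' : Finset M.X) : Prop :=
  M.IsMatching X' ∧ ∀ h X'', ¬ M.IsBlocking α X' h X''

end Market

open scoped Classical

section RankPref

/-- A strict linear order induced by a rank function (smaller rank = more preferred),
with ties broken by an encoding of the underlying countable type. -/
def rankPref {β : Type} [Encodable β] (rank : β → ℕ) (o o' : β) : Prop :=
  rank o < rank o' ∨ (rank o = rank o' ∧ Encodable.encode o < Encodable.encode o')

theorem rankPref_irrefl {β : Type} [Encodable β] (rank : β → ℕ) (o : β) :
    ¬ rankPref rank o o := by
  rintro (h | ⟨-, h⟩) <;> exact lt_irrefl _ h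

theorem rankPref_trans {β : Type} [Encodable β] (rank : β → ℕ) (o₁ o₂ o₃ : β)
    (h₁ : rankPref rank o₁ o₂) (h₂ : rankPref rank o₂ o₃) : rankPref rank o₁ o₃ := by
  rcases h₁ with h₁ | ⟨e₁, l₁⟩ <;> rcases h₂ with h₂ | ⟨e₂, l₂⟩
  · exact Or.inl (h₁.trans h₂)
  · exact Or.inl (e₂ ▸ h₁)
  · exact Or.inl (e₁ ▸ h₂)
  · exact Or.inr ⟨e₁.trans e₂, l₁.trans l₂⟩

theorem rankPref_total {β : Type} [Encodable β] (rank : β → ℕ) (o₁ o₂ : β)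
    (hne : o₁ ≠ o₂) : rankPref rank o₁ o₂ ∨ rankPref rank o₂ o₁ := by
  rcases lt_trichotomy (rank o₁) (rank o₂) with h | h | h
  · exact Or.inl (Or.inl h)
  · rcases lt_or_gt_of_ne (fun he => hne (Encodable.encode_injective he)) with h' | h'
    · exact Or.inl (Or.inr ⟨h, h'⟩)
    · exact Or.inr (Or.inr ⟨h.symm, h'⟩)
  · exact Or.inr (Or.inl h)

end RankPref

namespace SubsetSumGen

/-- Contracts of the market `N(a,t,α)`:
`.inl (i,k)` is `r^{i,k+1}` (`k ∈ {0,1,2}`);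
`.inr (.inl (i,j₀))` is `x^{i,j₀+1}` (`j₀+1 ∈ {1,…,m}`);
`.inr (.inr (.inl (i,j₀)))` is `y^{i,j₀+2}` (`j₀+2 ∈ {2,…,m}`);
`.inr (.inr (.inr (i,j₀)))` is `z^{i,j₀+1}` (`j₀+1 ∈ {1,…,m-1}`). -/
abbrev XN (n m : ℕ) :=
  (Fin n × Fin 3) ⊕ ((Fin n × Fin m) ⊕ ((Fin n × Fin (m - 1)) ⊕ (Fin n × Fin (m - 1))))

/-- Doctors are `d_i^j` for `i ∈ {1,…,n}`, `j ∈ {0,…,m}`. -/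
abbrev DN (n m : ℕ) := Fin n × Fin (m + 1)

/-- Hospitals: `.inl 0 = h⁺`, `.inl 1 = h⁻`, `.inr (i,j) = h_i^j` for `j ∈ {0,…,m-1}`. -/
abbrev HN (n m : ℕ) := Fin 2 ⊕ (Fin n × Fin m)

/-- Doctor of each contract: `r^{i,·} ↦ d_i^0`, `x^{i,j} ↦ d_i^j`, `y^{i,j} ↦ d_i^j`,
`z^{i,j} ↦ d_i^j`. -/
def docN (n m : ℕ) : XN n m → DN n m
  | .inl (i, _) => (i, ⟨0, by omega⟩)
  | .inr (.inl (i, j₀)) => (i, ⟨(j₀ : ℕ) + 1, by have := j₀.isLt; omega⟩)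
  | .inr (.inr (.inl (i, j₀))) => (i, ⟨(j₀ : ℕ) + 2, by have := j₀.isLt; omega⟩)
  | .inr (.inr (.inr (i, j₀))) => (i, ⟨(j₀ : ℕ) + 1, by have := j₀.isLt; omega⟩)

/-- Hospital of each contract: `r^{i,1} ↦ h⁺`, `r^{i,2} ↦ h⁻`, `r^{i,3} ↦ h_i^0`,
`x^{i,j} ↦ h_i^0`, `y^{i,j} ↦ h_i^{j-1}`, `z^{i,j} ↦ h_i^j`. -/
def hosN (n m : ℕ) (hm : 0 < m) : XN n m → HN n m
  | .inl (i, k) =>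
      if (k : ℕ) = 0 then .inl 0
      else if (k : ℕ) = 1 then .inl 1
      else .inr (i, ⟨0, hm⟩)
  | .inr (.inl (i, _)) => .inr (i, ⟨0, hm⟩)
  | .inr (.inr (.inl (i, j₀))) => .inr (i, ⟨(j₀ : ℕ) + 1, by have := j₀.isLt; omega⟩)
  | .inr (.inr (.inr (i, j₀))) => .inr (i, ⟨(j₀ : ℕ) + 1, by have := j₀.isLt; omega⟩)

/-- Utilities: `u(r^{i,1}) = aᵢ/t`, `u(r^{i,2}) = aᵢ/(a−t)`, `u(r^{i,3}) = 1`,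
`u(x^{i,j}) = 2α/m`, `u(y^{i,j}) = 1`, `u(z^{i,j}) = 2α`. -/
noncomputable def uN (n m : ℕ) (a : Fin n → ℕ) (t : ℕ) (α : ℝ) : XN n m → ℝ
  | .inl (i, k) =>
      if (k : ℕ) = 0 then (a i : ℝ) / (t : ℝ)
      else if (k : ℕ) = 1 then (a i : ℝ) / ((∑ j, (a j : ℝ)) - (t : ℝ))
      else 1
  | .inr (.inl _) => 2 * α / (m : ℝ)
  | .inr (.inr (.inl _)) => 1
  | .inr (.inr (.inr _)) => 2 * α

/-- Sizes: `s(r^{i,1}) = aᵢ/t`, `s(r^{i,2}) = aᵢ/(a−t)`, `s(r^{i,3}) = 1`,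
`s(x^{i,j}) = 1/m`, `s(y^{i,j}) = 1`, `s(z^{i,j}) = 1`. -/
noncomputable def sN (n m : ℕ) (a : Fin n → ℕ) (t : ℕ) : XN n m → ℝ
  | .inl (i, k) =>
      if (k : ℕ) = 0 then (a i : ℝ) / (t : ℝ)
      else if (k : ℕ) = 1 then (a i : ℝ) / ((∑ j, (a j : ℝ)) - (t : ℝ))
      else 1
  | .inr (.inl _) => 1 / (m : ℝ)
  | .inr (.inr (.inl _)) => 1
  | .inr (.inr (.inr _)) => 1

/-- Ranks encoding the preferences
`r^{i,1} ≻_{d_i^0} r^{i,2} ≻_{d_i^0} r^{i,3} ≻_{d_i^0} ∅`,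
`x^{i,1} ≻_{d_i^1} z^{i,1} ≻_{d_i^1} ∅`,
`y^{i,j} ≻_{d_i^j} x^{i,j} ≻_{d_i^j} z^{i,j} ≻_{d_i^j} ∅` (`2 ≤ j ≤ m−1`), and
`y^{i,m} ≻_{d_i^m} x^{i,m} ≻_{d_i^m} ∅`. -/
def rankN (n m : ℕ) (d : DN n m) : Option (XN n m) → ℕ
  | none => 4
  | some (.inl (i, k)) => if i = d.1 ∧ (d.2 : ℕ) = 0 then (k : ℕ) else 9
  | some (.inr (.inl (i, j₀))) =>
      if i = d.1 ∧ (d.2 : ℕ) = (j₀ : ℕ) + 1 then (if (d.2 : ℕ) = 1 then 0 else 1) else 9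
  | some (.inr (.inr (.inl (i, j₀)))) =>
      if i = d.1 ∧ (d.2 : ℕ) = (j₀ : ℕ) + 2 then 0 else 9
  | some (.inr (.inr (.inr (i, j₀)))) =>
      if i = d.1 ∧ (d.2 : ℕ) = (j₀ : ℕ) + 1 then (if (d.2 : ℕ) = 1 then 1 else 2) else 9

/-- The market `N(a,t,α)` of the subset-sum reduction (with `m = ⌈3α²⌉`). -/
noncomputable def mkt (n m : ℕ) (a : Fin n → ℕ) (t : ℕ) (α : ℝ)
    (hm : 0 < m) (hta : (t : ℝ) < ∑ j, (a j : ℝ)) (hα : 0 ≤ α) : Market where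
  D := DN n m
  H := HN n m
  X := XN n m
  fintypeX := inferInstance
  decEqX := inferInstance
  decEqD := inferInstance
  decEqH := inferInstance
  doc := docN n m
  hos := hosN n m hm
  pref := fun d => rankPref (rankN n m d)
  u := uN n m a t α
  s := sN n m a t
  u_nonneg := by
    rintro ((⟨i, k⟩) | ((⟨i, j₀⟩) | ((⟨i, j₀⟩) | (⟨i, j₀⟩))))
    · simp only [uN]
      split_ifs
      · positivity
      · exact div_nonneg (by positivity) (by linarith)
      · norm_num
    · simp only [uN]; positivity
    · simp only [uN]; norm_num
    · simp only [uN]; positivity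
  s_nonneg := by
    rintro ((⟨i, k⟩) | ((⟨i, j₀⟩) | ((⟨i, j₀⟩) | (⟨i, j₀⟩))))
    · simp only [sN]
      split_ifs
      · positivity
      · exact div_nonneg (by positivity) (by linarith)
      · norm_num
    · simp only [sN]; positivity
    · simp only [sN]; norm_num
    · simp only [sN]; norm_num
  pref_irrefl := fun d o => rankPref_irrefl _ o
  pref_trans := fun d o₁ o₂ o₃ => rankPref_trans _ o₁ o₂ o₃
  pref_total := fun d o₁ o₂ _ _ hne => rankPref_total _ o₁ o₂ hne

/-- The claimed stable matching
`{r^{i,1} : i ∈ I*} ∪ {r^{i,2} : i ∉ I*} ∪ ⋃ᵢ ({x^{i,1}} ∪ {y^{i,2},…,y^{i,m}})`. -/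
noncomputable def stableSet (n m : ℕ) (I : Finset (Fin n)) : Finset (XN n m) :=
  Finset.univ.filter (fun c => match c with
    | .inl (i, k) => ((k : ℕ) = 0 ∧ i ∈ I) ∨ ((k : ℕ) = 1 ∧ i ∉ I)
    | .inr (.inl (_, j₀)) => (j₀ : ℕ) = 0
    | .inr (.inr (.inl _)) => True
    | .inr (.inr (.inr _)) => False)

end SubsetSumGen
namespace SubsetSumGen

lemma mem_stableSet_r {n m : ℕ} {I : Finset (Fin n)} {i : Fin n} {k : Fin 3} :
    (Sum.inl (i, k) : XN n m) ∈ stableSet n m I ↔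
      ((k : ℕ) = 0 ∧ i ∈ I) ∨ ((k : ℕ) = 1 ∧ i ∉ I) := by
  simp [stableSet]

lemma mem_stableSet_x {n m : ℕ} {I : Finset (Fin n)} {i : Fin n} {j₀ : Fin m} :
    (Sum.inr (Sum.inl (i, j₀)) : XN n m) ∈ stableSet n m I ↔ (j₀ : ℕ) = 0 := by
  simp [stableSet]

lemma mem_stableSet_y {n m : ℕ} {I : Finset (Fin n)} {i : Fin n} {j₀ : Fin (m - 1)} :
    (Sum.inr (Sum.inr (Sum.inl (i, j₀))) : XN n m) ∈ stableSet n m I := by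
  simp [stableSet]

lemma mem_stableSet_z {n m : ℕ} {I : Finset (Fin n)} {i : Fin n} {j₀ : Fin (m - 1)} :
    (Sum.inr (Sum.inr (Sum.inr (i, j₀))) : XN n m) ∉ stableSet n m I := by
  simp [stableSet]

theorem main (n m : ℕ) (a : Fin n → ℕ) (t : ℕ) (α : ℝ)
    (hm : 0 < m) (hta : (t : ℝ) < ∑ j, (a j : ℝ)) (hα : 0 ≤ α)
    (ht : 0 < t) (I : Finset (Fin n)) (hI : ∑ i ∈ I, a i = t) :
    (mkt n m a t α hm hta hα).IsStable 1 (stableSet n m I) := by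
  dsimp only [mkt, Market.IsStable, Market.IsMatching, Market.IsBlocking,
    Market.Prefers, Market.restrD, Market.restrH, Market.sSum, Market.uSum]
  have htR : (0 : ℝ) < (t : ℝ) := by exact_mod_cast ht
  have hAt : (0 : ℝ) < (∑ j, (a j : ℝ)) - t := by linarith
  have hsumI : ∑ i ∈ I, (a i : ℝ) = (t : ℝ) := by rw [← Nat.cast_sum, hI]
  have hsumIc : ∑ i ∈ Iᶜ, (a i : ℝ) = (∑ j, (a j : ℝ)) - t := by
    have := Finset.sum_add_sum_compl I (fun i => (a i : ℝ))
    linarith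
  -- restrH characterizations
  have hRp : Finset.filter (fun x => hosN n m hm x = Sum.inl 0) (stableSet n m I)
      = I.image (fun i => (Sum.inl (i, (0 : Fin 3)) : XN n m)) := by
    ext x
    rcases x with ⟨i, k⟩ | (⟨i, j₀⟩ | (⟨i, j₀⟩ | ⟨i, j₀⟩))
    · fin_cases k <;> simp [hosN, mem_stableSet_r]
    · simp [hosN]
    · simp [hosN]
    · simp [hosN, mem_stableSet_z]
  have hRm : Finset.filter (fun x => hosN n m hm x = Sum.inl 1) (stableSet n m I)
      = Iᶜ.image (fun i => (Sum.inl (i, (1 : Fin 3)) : XN n m)) := by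
    ext x
    rcases x with ⟨i, k⟩ | (⟨i, j₀⟩ | (⟨i, j₀⟩ | ⟨i, j₀⟩))
    · fin_cases k <;> simp [hosN, mem_stableSet_r]
    · simp [hosN]
    · simp [hosN]
    · simp [hosN, mem_stableSet_z]
  have hRh0 : ∀ (i : Fin n) (j : Fin m), (j : ℕ) = 0 →
      Finset.filter (fun x => hosN n m hm x = Sum.inr (i, j)) (stableSet n m I)
        = {(Sum.inr (Sum.inl (i, ⟨0, hm⟩)) : XN n m)} := by
    intro i j hj
    ext x
    rw [Finset.mem_filter]
    rcases x with ⟨i', k⟩ | (⟨i', j₀⟩ | (⟨i', j₀⟩ | ⟨i', j₀⟩))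
    · fin_cases k <;>
        simp [hosN, mem_stableSet_r, Prod.ext_iff, Fin.ext_iff, hj, -Fin.val_eq_zero_iff]
    · simp [hosN, mem_stableSet_x, Prod.ext_iff, Fin.ext_iff, hj, -Fin.val_eq_zero_iff]
      tauto
    · simp [hosN, mem_stableSet_y, Prod.ext_iff, Fin.ext_iff, hj, -Fin.val_eq_zero_iff]
    · simp [hosN, mem_stableSet_z]
  have hRh1 : ∀ (i : Fin n) (j : Fin m) (hj : (j : ℕ) ≠ 0),
      Finset.filter (fun x => hosN n m hm x = Sum.inr (i, j)) (stableSet n m I)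
        = {(Sum.inr (Sum.inr (Sum.inl (i, ⟨(j : ℕ) - 1, by have := j.isLt; omega⟩)))
            : XN n m)} := by
    intro i j hj
    ext x
    rw [Finset.mem_filter]
    rcases x with ⟨i', k⟩ | (⟨i', j₀⟩ | (⟨i', j₀⟩ | ⟨i', j₀⟩))
    · fin_cases k <;>
        simp [hosN, mem_stableSet_r, Prod.ext_iff, Fin.ext_iff, -Fin.val_eq_zero_iff] <;> omega
    · simp [hosN, mem_stableSet_x, Prod.ext_iff, Fin.ext_iff, -Fin.val_eq_zero_iff]
      omega
    · simp [hosN, mem_stableSet_y, Prod.ext_iff, Fin.ext_iff, -Fin.val_eq_zero_iff]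
      intro _
      omega
    · simp [hosN, mem_stableSet_z]
  have hinj : ∀ k : Fin 3, ∀ i ∈ I ∪ Iᶜ, ∀ i' ∈ I ∪ Iᶜ,
      (Sum.inl (i, k) : XN n m) = Sum.inl (i', k) → i = i' := by
    intro k i _ i' _ h; simpa using h
  have hup : ∑ x ∈ Finset.filter (fun x => hosN n m hm x = Sum.inl 0) (stableSet n m I),
      uN n m a t α x = 1 := by
    rw [hRp, Finset.sum_image (fun i hi i' hi' h => by simpa using h)]
    have : ∀ i ∈ I, uN n m a t α (Sum.inl (i, (0 : Fin 3)) : XN n m) = (a i : ℝ) / t := by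
      intro i _; simp [uN]
    rw [Finset.sum_congr rfl this, ← Finset.sum_div, hsumI, div_self (ne_of_gt htR)]
  have hsp : ∑ x ∈ Finset.filter (fun x => hosN n m hm x = Sum.inl 0) (stableSet n m I),
      sN n m a t x = 1 := by
    rw [hRp, Finset.sum_image (fun i hi i' hi' h => by simpa using h)]
    have : ∀ i ∈ I, sN n m a t (Sum.inl (i, (0 : Fin 3)) : XN n m) = (a i : ℝ) / t := by
      intro i _; simp [sN]
    rw [Finset.sum_congr rfl this, ← Finset.sum_div, hsumI, div_self (ne_of_gt htR)]
  have hsm : ∑ x ∈ Finset.filter (fun x => hosN n m hm x = Sum.inl 1) (stableSet n m I),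
      sN n m a t x = 1 := by
    rw [hRm, Finset.sum_image (fun i hi i' hi' h => by simpa using h)]
    have : ∀ i ∈ Iᶜ, sN n m a t (Sum.inl (i, (1 : Fin 3)) : XN n m)
        = (a i : ℝ) / ((∑ j, (a j : ℝ)) - t) := by
      intro i _; simp [sN]
    rw [Finset.sum_congr rfl this, ← Finset.sum_div, hsumIc, div_self (ne_of_gt hAt)]
  -- key lemma: preferred contracts are the r^{i,1}, i ∉ I
  have hKey : ∀ x : XN n m,
      (∀ x' ∈ Finset.filter (fun y => docN n m y = docN n m x) (stableSet n m I),
        rankPref (rankN n m (docN n m x)) (some x) (some x')) →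
      ∃ i : Fin n, x = Sum.inl (i, (0 : Fin 3)) ∧ i ∉ I := by
    intro x hx
    rcases x with ⟨i, k⟩ | (⟨i, j₀⟩ | (⟨i, j₀⟩ | ⟨i, j₀⟩))
    · by_cases hiI : i ∈ I
      · exfalso
        have hc : (Sum.inl (i, (0:Fin 3)) : XN n m)
            ∈ Finset.filter (fun y => docN n m y = docN n m (Sum.inl (i, k)))
              (stableSet n m I) := by
          refine Finset.mem_filter.mpr ⟨?_, rfl⟩
          simp [mem_stableSet_r, hiI]
        have hp := hx _ hc
        rw [rankPref] at hp
        rcases hp with hlt | ⟨heq, henc⟩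
        · simp [rankN, docN] at hlt
        · simp [rankN, docN] at heq
          have hk : k = 0 := Fin.ext (by simpa using heq)
          rw [hk] at henc
          exact lt_irrefl _ henc
      · refine ⟨i, ?_, hiI⟩
        have hc : (Sum.inl (i, (1:Fin 3)) : XN n m)
            ∈ Finset.filter (fun y => docN n m y = docN n m (Sum.inl (i, k)))
              (stableSet n m I) := by
          refine Finset.mem_filter.mpr ⟨?_, rfl⟩
          simp [mem_stableSet_r, hiI]
        have hp := hx _ hc
        rw [rankPref] at hp
        rcases hp with hlt | ⟨heq, henc⟩
        · simp [rankN, docN] at hlt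
          have hk : k = 0 := Fin.ext (by omega)
          rw [hk]
        · simp [rankN, docN] at heq
          have hk : k = 1 := Fin.ext (by simpa using heq)
          rw [hk] at henc
          exact absurd henc (lt_irrefl _)
    · exfalso
      by_cases hj : (j₀ : ℕ) = 0
      · have hc : (Sum.inr (Sum.inl (i, j₀)) : XN n m)
            ∈ Finset.filter (fun y => docN n m y = docN n m (Sum.inr (Sum.inl (i, j₀))))
              (stableSet n m I) := by
          simp [Finset.mem_filter, mem_stableSet_x, hj]
        exact rankPref_irrefl _ _ (hx _ hc)
      · have hj1 : (j₀ : ℕ) - 1 < m - 1 := by have := j₀.isLt; omega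
        have hc : (Sum.inr (Sum.inr (Sum.inl (i, ⟨(j₀ : ℕ) - 1, hj1⟩))) : XN n m)
            ∈ Finset.filter (fun y => docN n m y = docN n m (Sum.inr (Sum.inl (i, j₀))))
              (stableSet n m I) := by
          simp [Finset.mem_filter, mem_stableSet_y, docN, Prod.ext_iff, Fin.ext_iff]
          omega
        have hp := hx _ hc
        have r1 : rankN n m (docN n m (Sum.inr (Sum.inl (i, j₀)) : XN n m))
            (some (Sum.inr (Sum.inr (Sum.inl (i, ⟨(j₀ : ℕ) - 1, hj1⟩))))) = 0 := by
          simp [rankN, docN, show (j₀ : ℕ) - 1 + 2 = (j₀ : ℕ) + 1 from by omega]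
        have r2 : rankN n m (docN n m (Sum.inr (Sum.inl (i, j₀)) : XN n m))
            (some (Sum.inr (Sum.inl (i, j₀)))) = 1 := by
          simp [rankN, docN, hj]
        rw [rankPref, r1, r2] at hp
        rcases hp with hlt | ⟨heq, -⟩ <;> omega
    · exfalso
      have hc : (Sum.inr (Sum.inr (Sum.inl (i, j₀))) : XN n m)
          ∈ Finset.filter
            (fun y => docN n m y = docN n m (Sum.inr (Sum.inr (Sum.inl (i, j₀)))))
            (stableSet n m I) := by
        simp [Finset.mem_filter, mem_stableSet_y]
      exact rankPref_irrefl _ _ (hx _ hc)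
    · exfalso
      by_cases hj : (j₀ : ℕ) = 0
      · have hc : (Sum.inr (Sum.inl (i, ⟨0, hm⟩)) : XN n m)
            ∈ Finset.filter
              (fun y => docN n m y = docN n m (Sum.inr (Sum.inr (Sum.inr (i, j₀)))))
              (stableSet n m I) := by
          simp [Finset.mem_filter, mem_stableSet_x, docN, Prod.ext_iff, Fin.ext_iff]
          omega
        have hp := hx _ hc
        have r1 : rankN n m (docN n m (Sum.inr (Sum.inr (Sum.inr (i, j₀))) : XN n m))
            (some (Sum.inr (Sum.inl (i, ⟨0, hm⟩)))) = 0 := by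
          simp [rankN, docN, hj]
        have r2 : rankN n m (docN n m (Sum.inr (Sum.inr (Sum.inr (i, j₀))) : XN n m))
            (some (Sum.inr (Sum.inr (Sum.inr (i, j₀))))) = 1 := by
          simp [rankN, docN, hj]
        rw [rankPref, r1, r2] at hp
        rcases hp with hlt | ⟨heq, -⟩ <;> omega
      · have hj1 : (j₀ : ℕ) - 1 < m - 1 := by have := j₀.isLt; omega
        have hc : (Sum.inr (Sum.inr (Sum.inl (i, ⟨(j₀ : ℕ) - 1, hj1⟩))) : XN n m)
            ∈ Finset.filter
              (fun y => docN n m y = docN n m (Sum.inr (Sum.inr (Sum.inr (i, j₀)))))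
              (stableSet n m I) := by
          simp [Finset.mem_filter, mem_stableSet_y, docN, Prod.ext_iff, Fin.ext_iff]
          omega
        have hp := hx _ hc
        have r1 : rankN n m (docN n m (Sum.inr (Sum.inr (Sum.inr (i, j₀))) : XN n m))
            (some (Sum.inr (Sum.inr (Sum.inl (i, ⟨(j₀ : ℕ) - 1, hj1⟩))))) = 0 := by
          simp [rankN, docN, show (j₀ : ℕ) - 1 + 2 = (j₀ : ℕ) + 1 from by omega]
        have r2 : rankN n m (docN n m (Sum.inr (Sum.inr (Sum.inr (i, j₀))) : XN n m))
            (some (Sum.inr (Sum.inr (Sum.inr (i, j₀))))) = 2 := by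
          simp [rankN, docN, hj]
        rw [rankPref, r1, r2] at hp
        rcases hp with hlt | ⟨heq, -⟩ <;> omega
  refine ⟨⟨?_, ?_⟩, ?_⟩
  · -- each doctor at most one contract
    intro d
    rw [Finset.card_le_one]
    intro x hx y hy
    rw [Finset.mem_filter] at hx hy
    obtain ⟨hxS, hxd⟩ := hx
    obtain ⟨hyS, hyd⟩ := hy
    rw [← hyd] at hxd
    rcases x with ⟨i, k⟩ | (⟨i, j₀⟩ | (⟨i, j₀⟩ | ⟨i, j₀⟩)) <;>
      rcases y with ⟨i', k'⟩ | (⟨i', j₀'⟩ | (⟨i', j₀'⟩ | ⟨i', j₀'⟩)) <;>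
      simp only [docN, Prod.mk.injEq, Fin.mk.injEq] at hxd <;>
      obtain ⟨hi, hj⟩ := hxd
    · subst hi
      rw [mem_stableSet_r] at hxS hyS
      rcases hxS with ⟨h1, h2⟩ | ⟨h1, h2⟩ <;> rcases hyS with ⟨h1', h2'⟩ | ⟨h1', h2'⟩
      · have : k = k' := Fin.ext (by omega)
        rw [this]
      · exact absurd h2 h2'
      · exact absurd h2' h2
      · have : k = k' := Fin.ext (by omega)
        rw [this]
    · exact absurd hj (by omega)
    · exact absurd hj (by omega)
    · exact absurd hj (by omega)
    · exact absurd hj (by omega)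
    · subst hi
      rw [mem_stableSet_x] at hxS hyS
      have : j₀ = j₀' := Fin.ext (by omega)
      rw [this]
    · rw [mem_stableSet_x] at hxS
      exact absurd hj (by omega)
    · exact absurd hyS mem_stableSet_z
    · exact absurd hj (by omega)
    · rw [mem_stableSet_x] at hyS
      exact absurd hj (by omega)
    · subst hi
      have : j₀ = j₀' := Fin.ext (by omega)
      rw [this]
    · exact absurd hyS mem_stableSet_z
    · exact absurd hxS mem_stableSet_z
    · exact absurd hxS mem_stableSet_z
    · exact absurd hxS mem_stableSet_z
    · exact absurd hxS mem_stableSet_z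
  · -- budgets
    intro h
    rcases h with f | ⟨i, j⟩
    · fin_cases f
      · exact hsp.le
      · exact hsm.le
    · by_cases hj : (j : ℕ) = 0
      · rw [hRh0 i j hj, Finset.sum_singleton]
        have : sN n m a t (Sum.inr (Sum.inl (i, ⟨0, hm⟩)) : XN n m) = 1 / m := by
          simp [sN]
        rw [this, div_le_one (by exact_mod_cast hm)]
        exact_mod_cast hm
      · rw [hRh1 i j hj, Finset.sum_singleton]
        have : sN n m a t (Sum.inr (Sum.inr (Sum.inl (i,
            ⟨(j : ℕ) - 1, by have := j.isLt; omega⟩))) : XN n m) = 1 := by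
          simp [sN]
        rw [this]
  · -- no 1-blocking coalition
    rintro h X'' ⟨hHos, hMat, hPref, hGt⟩
    by_cases hh : h = Sum.inl (0 : Fin 2)
    · subst hh
      have hall : ∀ x ∈ X'', ∃ i, x = (Sum.inl (i, (0 : Fin 3)) : XN n m) := by
        intro x hx
        have hxh := hHos x hx
        rcases x with ⟨i, k⟩ | (⟨i, j₀⟩ | (⟨i, j₀⟩ | ⟨i, j₀⟩))
        · refine ⟨i, ?_⟩
          fin_cases k <;> simp [hosN] at hxh ⊢
        · simp [hosN] at hxh
        · simp [hosN] at hxh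
        · simp [hosN] at hxh
      have hus : ∑ x ∈ X'', uN n m a t α x = ∑ x ∈ X'', sN n m a t x := by
        refine Finset.sum_congr rfl fun x hx => ?_
        obtain ⟨i, rfl⟩ := hall x hx
        simp [uN, sN]
      have hXh : Finset.filter (fun x => hosN n m hm x = Sum.inl 0) X'' = X'' :=
        Finset.filter_true_of_mem hHos
      have hle := hMat.2 (Sum.inl 0)
      rw [hXh] at hle
      rw [hup, hus] at hGt
      linarith
    · have hsub : X'' ⊆ Finset.filter (fun x => hosN n m hm x = h) (stableSet n m I) := by
        intro x hx
        have hxh := hHos x hx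
        by_cases hxS : x ∈ stableSet n m I
        · exact Finset.mem_filter.mpr ⟨hxS, hxh⟩
        · exfalso
          have hp := hPref x (Finset.mem_sdiff.mpr ⟨hx, hxS⟩)
          obtain ⟨i, rfl, -⟩ := hKey x hp.1
          apply hh
          rw [← hxh]
          simp [hosN]
      have hmono : ∑ x ∈ X'', uN n m a t α x
          ≤ ∑ x ∈ Finset.filter (fun x => hosN n m hm x = h) (stableSet n m I),
              uN n m a t α x := by
        refine Finset.sum_le_sum_of_subset_of_nonneg hsub fun x _ _ => ?_
        exact (mkt n m a t α hm hta hα).u_nonneg x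
      rw [one_mul] at hGt
      linarith

end SubsetSumGen

/-- (Yes-instance direction of the subset-sum reduction.) Let `α > 1`,
`m = ⌈3α²⌉`, and suppose `Σ_{i∈I*} aᵢ = t`. Then the set
`{r^{i,1} : i ∈ I*} ∪ {r^{i,2} : i ∉ I*} ∪ ⋃ᵢ ({x^{i,1}} ∪ {y^{i,2},…,y^{i,m}})`
is a `1`-stable matching of the market `N(a,t,α)`. -/
theorem subsetSumGen_yes_one_stable (α : ℝ) (hα : 1 < α) (n : ℕ) (a : Fin n → ℕ) (t : ℕ)
    (ha : ∀ i, 0 < a i) (ht : 0 < t) (hta : t < ∑ i, a i)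
    (m : ℕ) (hm : m = ⌈3 * α ^ 2⌉₊)
    (I : Finset (Fin n)) (hI : ∑ i ∈ I, a i = t) :
    (SubsetSumGen.mkt n m a t α
        (by rw [hm]; exact Nat.ceil_pos.mpr (by positivity))
        (by exact_mod_cast hta) (by linarith)).IsStable 1
      (SubsetSumGen.stableSet n m I) := by
  exact SubsetSumGen.main n m a t α _ _ _ ht I hI
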